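/- Let K, L be convex bodies in ℝ³ containing the origin in their interiors, with relative quermassintegrals W₀, W₁, W₂, W₃ of K with respect to L, and assume W₂ > 0. Let μ be the surface area measure of K. If K is in the class ℜ₁ with respect to L, then ∫_{S²} h_K(u)²/h_L(u) dμ(u) ≤ 3 V(K) W₁ / W₂. -/

import Mathlib

open scoped Pointwise RealInnerProductSpace
open MeasureTheory Metric

noncomputable section

/-- The support function `h_K(u) = sup_{x ∈ K} ⟨x, u⟩` of a set `K ⊆ ℝ³`. -/
def supp (K : Set (EuclideanSpace ℝ (Fin 3))) (u : EuclideanSpace ℝ (Fin 3)) : ℝ :=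
  sSup ((fun x => ⟪x, u⟫) '' K)

lemma supp_bddAbove {S : Set (EuclideanSpace ℝ (Fin 3))} (hb : Bornology.IsBounded S)
    (u : EuclideanSpace ℝ (Fin 3)) : BddAbove ((fun x => ⟪x, u⟫) '' S) := by
  obtain ⟨C, hC⟩ := hb.exists_norm_le
  refine ⟨C * ‖u‖, ?_⟩
  rintro _ ⟨x, hx, rfl⟩
  calc ⟪x, u⟫ ≤ ‖x‖ * ‖u‖ := real_inner_le_norm x u
    _ ≤ C * ‖u‖ := mul_le_mul_of_nonneg_right (hC x hx) (norm_nonneg u)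

lemma le_supp {S : Set (EuclideanSpace ℝ (Fin 3))} (hb : Bornology.IsBounded S)
    {x : EuclideanSpace ℝ (Fin 3)} (hx : x ∈ S) (u : EuclideanSpace ℝ (Fin 3)) :
    ⟪x, u⟫ ≤ supp S u :=
  le_csSup (supp_bddAbove hb u) ⟨x, hx, rfl⟩

lemma supp_le {S : Set (EuclideanSpace ℝ (Fin 3))} (hne : S.Nonempty)
    {u : EuclideanSpace ℝ (Fin 3)} {c : ℝ} (h : ∀ x ∈ S, ⟪x, u⟫ ≤ c) : supp S u ≤ c :=
  csSup_le (hne.image _) (by rintro _ ⟨x, hx, rfl⟩; exact h x hx)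

lemma supp_nonneg {S : Set (EuclideanSpace ℝ (Fin 3))} (hb : Bornology.IsBounded S)
    (h0 : (0 : EuclideanSpace ℝ (Fin 3)) ∈ S) (u : EuclideanSpace ℝ (Fin 3)) :
    0 ≤ supp S u := by
  have := le_supp hb h0 u
  simpa using this

lemma supp_ge_half {S : Set (EuclideanSpace ℝ (Fin 3))} (hb : Bornology.IsBounded S)
    {ε : ℝ} (hε : 0 < ε) (hball : ball (0 : EuclideanSpace ℝ (Fin 3)) ε ⊆ S)
    {u : EuclideanSpace ℝ (Fin 3)} (hu : ‖u‖ = 1) : ε / 2 ≤ supp S u := by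
  have hx : (ε/2) • u ∈ S := by
    apply hball
    rw [mem_ball_zero_iff, norm_smul, hu, mul_one, Real.norm_eq_abs,
      abs_of_pos (by linarith : (0:ℝ) < ε/2)]
    linarith
  have := le_supp hb hx u
  have h2 : ⟪(ε/2) • u, u⟫ = ε/2 := by
    rw [real_inner_smul_left, real_inner_self_eq_norm_sq, hu]; ring
  rw [h2] at this
  linarith

lemma supp_pos {S : Set (EuclideanSpace ℝ (Fin 3))} (hb : Bornology.IsBounded S)
    {ε : ℝ} (hε : 0 < ε) (hball : ball (0 : EuclideanSpace ℝ (Fin 3)) ε ⊆ S)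
    {u : EuclideanSpace ℝ (Fin 3)} (hu : ‖u‖ = 1) : 0 < supp S u :=
  lt_of_lt_of_le (by linarith) (supp_ge_half hb hε hball hu)

lemma supp_continuous {S : Set (EuclideanSpace ℝ (Fin 3))} (hb : Bornology.IsBounded S)
    (hne : S.Nonempty) : Continuous (supp S) := by
  obtain ⟨C, hC⟩ := hb.exists_norm_le
  have hC0 : 0 ≤ C := le_trans (norm_nonneg _) (hC _ hne.choose_spec)
  have key : ∀ u v : EuclideanSpace ℝ (Fin 3), supp S u ≤ supp S v + C * ‖u - v‖ := by
    intro u v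
    apply supp_le hne
    intro x hx
    have h1 : ⟪x, u⟫ = ⟪x, v⟫ + ⟪x, u - v⟫ := by rw [← inner_add_right]; congr 1; abel
    have h2 : ⟪x, v⟫ ≤ supp S v := le_supp hb hx v
    have h3 : ⟪x, u - v⟫ ≤ C * ‖u - v‖ :=
      le_trans (real_inner_le_norm x (u - v))
        (mul_le_mul_of_nonneg_right (hC x hx) (norm_nonneg _))
    linarith
  have : LipschitzWith (Real.toNNReal C) (supp S) := by
    apply LipschitzWith.of_dist_le_mul
    intro u v
    rw [Real.dist_eq, dist_eq_norm, Real.coe_toNNReal C hC0]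
    rw [abs_le]
    constructor
    · have := key v u
      have hn : ‖v - u‖ = ‖u - v‖ := norm_sub_rev v u
      rw [hn] at this; linarith
    · have := key u v; linarith
  exact this.continuous
/-- `r_o(K,L) = min_{u ∈ S²} h_K(u)/h_L(u)`. -/
def rIn (K L : Set (EuclideanSpace ℝ (Fin 3))) : ℝ :=
  sInf ((fun u => supp K u / supp L u) '' sphere (0 : EuclideanSpace ℝ (Fin 3)) 1)

/-- `R_o(K,L) = max_{u ∈ S²} h_K(u)/h_L(u)`. -/
def rOut (K L : Set (EuclideanSpace ℝ (Fin 3))) : ℝ :=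
  sSup ((fun u => supp K u / supp L u) '' sphere (0 : EuclideanSpace ℝ (Fin 3)) 1)

/-- If `K` is in the class `ℜ₁` with respect to `L` and `W₂ > 0`, then
`∫_{S²} h_K²/h_L dS_K ≤ 3 V(K) W₁ / W₂`, where `S_K` is the surface area measure of `K`. -/
theorem integral_bound_of_class_R1
    (K L : Set (EuclideanSpace ℝ (Fin 3)))
    (hKc : IsCompact K) (hKconv : Convex ℝ K) (hKint : (interior K).Nonempty)
    (hLc : IsCompact L) (hLconv : Convex ℝ L) (hLint : (interior L).Nonempty)
    (hK0 : (0 : EuclideanSpace ℝ (Fin 3)) ∈ interior K)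
    (hL0 : (0 : EuclideanSpace ℝ (Fin 3)) ∈ interior L)
    (W₀ W₁ W₂ W₃ : ℝ)
    (hW : ∀ t : ℝ, 0 ≤ t →
      (volume (K + t • L)).toReal = W₀ + 3 * W₁ * t + 3 * W₂ * t ^ 2 + W₃ * t ^ 3)
    (μ : Measure (sphere (0 : EuclideanSpace ℝ (Fin 3)) 1)) (hμfin : IsFiniteMeasure μ)
    (hμ : ∀ M : Set (EuclideanSpace ℝ (Fin 3)),
      IsCompact M → Convex ℝ M → (interior M).Nonempty →
        Filter.Tendsto
          (fun t : ℝ => ((volume (K + t • M)).toReal - (volume K).toReal) / t)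
          (nhdsWithin 0 (Set.Ioi 0))
          (nhds (∫ u : sphere (0 : EuclideanSpace ℝ (Fin 3)) 1, supp M u ∂μ)))
    (hW₂pos : 0 < W₂)
    (hR1 : ∀ r ∈ Set.Icc (rIn K L) (rOut K L), 2 * W₁ * r - W₀ - W₂ * r ^ 2 ≥ 0) :
    (∫ u : sphere (0 : EuclideanSpace ℝ (Fin 3)) 1, (supp K u) ^ 2 / supp L u ∂μ)
      ≤ 3 * (volume K).toReal * W₁ / W₂ := by
  have hKb := hKc.isBounded
  have hLb := hLc.isBounded
  have hKne : K.Nonempty := ⟨0, interior_subset hK0⟩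
  have hLne : L.Nonempty := ⟨0, interior_subset hL0⟩
  obtain ⟨εK, hεK, hballK⟩ := Metric.mem_nhds_iff.mp (mem_interior_iff_mem_nhds.mp hK0)
  obtain ⟨εL, hεL, hballL⟩ := Metric.mem_nhds_iff.mp (mem_interior_iff_mem_nhds.mp hL0)
  obtain ⟨RK, hRK⟩ := hKb.exists_norm_le
  have hRK0 : 0 ≤ RK := le_trans (norm_nonneg _) (hRK 0 (interior_subset hK0))
  set V := (volume K).toReal with hVdef
  -- supp bounds on the sphere
  have hsphere : ∀ u : EuclideanSpace ℝ (Fin 3), u ∈ sphere (0 : EuclideanSpace ℝ (Fin 3)) 1 →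
      ‖u‖ = 1 := fun u hu => mem_sphere_zero_iff_norm.mp hu
  have hLpos : ∀ u ∈ sphere (0 : EuclideanSpace ℝ (Fin 3)) 1, 0 < supp L u :=
    fun u hu => supp_pos hLb hεL hballL (hsphere u hu)
  have hLhalf : ∀ u ∈ sphere (0 : EuclideanSpace ℝ (Fin 3)) 1, εL / 2 ≤ supp L u :=
    fun u hu => supp_ge_half hLb hεL hballL (hsphere u hu)
  have hKnn : ∀ u : EuclideanSpace ℝ (Fin 3), 0 ≤ supp K u :=
    fun u => supp_nonneg hKb (interior_subset hK0) u
  have hKle : ∀ u ∈ sphere (0 : EuclideanSpace ℝ (Fin 3)) 1, supp K u ≤ RK := by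
    intro u hu
    apply supp_le hKne
    intro x hx
    calc ⟪x, u⟫ ≤ ‖x‖ * ‖u‖ := real_inner_le_norm x u
      _ = ‖x‖ := by rw [hsphere u hu, mul_one]
      _ ≤ RK := hRK x hx
  -- W₀ = V
  have hV0 : V = W₀ := by
    have h := hW 0 le_rfl
    rw [Set.zero_smul_set hLne, add_zero] at h
    rw [hVdef, h]; ring
  -- ∫ supp L = 3 W₁
  have hIL : (∫ u : sphere (0 : EuclideanSpace ℝ (Fin 3)) 1, supp L u ∂μ) = 3 * W₁ := by
    have h1 := hμ L hLc hLconv hLint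
    have h2 : Filter.Tendsto (fun t : ℝ => 3 * W₁ + 3 * W₂ * t + W₃ * t ^ 2)
        (nhdsWithin 0 (Set.Ioi 0)) (nhds (3 * W₁)) := by
      have hc : Continuous fun t : ℝ => 3 * W₁ + 3 * W₂ * t + W₃ * t ^ 2 := by fun_prop
      exact (hc.tendsto' 0 (3 * W₁) (by norm_num)).mono_left nhdsWithin_le_nhds
    have h3 : Filter.Tendsto
        (fun t : ℝ => ((volume (K + t • L)).toReal - (volume K).toReal) / t)
        (nhdsWithin 0 (Set.Ioi 0)) (nhds (3 * W₁)) := by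
      refine h2.congr' ?_
      filter_upwards [self_mem_nhdsWithin] with t ht
      have ht' : (0 : ℝ) < t := ht
      rw [hW t ht'.le, ← hVdef, hV0]
      field_simp
      ring
    exact tendsto_nhds_unique h1 h3
  -- ∫ supp K = 3 V
  have hIK : (∫ u : sphere (0 : EuclideanSpace ℝ (Fin 3)) 1, supp K u ∂μ) = 3 * V := by
    have h1 := hμ K hKc hKconv hKint
    have h2 : Filter.Tendsto (fun t : ℝ => (3 + 3 * t + t ^ 2) * V)
        (nhdsWithin 0 (Set.Ioi 0)) (nhds (3 * V)) := by
      have hc : Continuous fun t : ℝ => (3 + 3 * t + t ^ 2) * V := by fun_prop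
      exact (hc.tendsto' 0 (3 * V) (by norm_num)).mono_left nhdsWithin_le_nhds
    have h3 : Filter.Tendsto
        (fun t : ℝ => ((volume (K + t • K)).toReal - (volume K).toReal) / t)
        (nhdsWithin 0 (Set.Ioi 0)) (nhds (3 * V)) := by
      refine h2.congr' ?_
      filter_upwards [self_mem_nhdsWithin] with t ht
      have ht' : (0 : ℝ) < t := ht
      have hKK : K + t • K = (1 + t) • K := by
        rw [hKconv.add_smul zero_le_one ht'.le, one_smul]
      have hvol : (volume (K + t • K)).toReal = (1 + t) ^ 3 * V := by
        rw [hKK, MeasureTheory.Measure.addHaar_smul volume (1 + t) K,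
          finrank_euclideanSpace_fin, ENNReal.toReal_mul, ENNReal.toReal_ofReal (abs_nonneg _),
          abs_of_pos (by positivity : (0:ℝ) < (1 + t) ^ 3), ← hVdef]
      rw [hvol, ← hVdef]
      field_simp
      ring
    exact tendsto_nhds_unique h1 h3
  -- continuity / integrability on the sphere
  have hfKcont : Continuous fun u : sphere (0 : EuclideanSpace ℝ (Fin 3)) 1 => supp K ↑u :=
    (supp_continuous hKb hKne).comp continuous_subtype_val
  have hfLcont : Continuous fun u : sphere (0 : EuclideanSpace ℝ (Fin 3)) 1 => supp L ↑u :=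
    (supp_continuous hLb hLne).comp continuous_subtype_val
  have hgcont : Continuous fun u : sphere (0 : EuclideanSpace ℝ (Fin 3)) 1 =>
      (supp K ↑u) ^ 2 / supp L ↑u :=
    (hfKcont.pow 2).div hfLcont fun u => (hLpos ↑u u.2).ne'
  have hintg : Integrable (fun u : sphere (0 : EuclideanSpace ℝ (Fin 3)) 1 =>
      W₂ * ((supp K ↑u) ^ 2 / supp L ↑u)) μ :=
    ((continuous_const.mul hgcont).integrable_of_hasCompactSupport
      (HasCompactSupport.of_compactSpace _))
  have hintr : Integrable (fun u : sphere (0 : EuclideanSpace ℝ (Fin 3)) 1 =>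
      2 * W₁ * supp K ↑u - W₀ * supp L ↑u) μ :=
    (((continuous_const.mul hfKcont).sub (continuous_const.mul hfLcont)).integrable_of_hasCompactSupport
      (HasCompactSupport.of_compactSpace _))
  -- bounds for the ratio function
  have hbddB : BddBelow ((fun u => supp K u / supp L u) ''
      sphere (0 : EuclideanSpace ℝ (Fin 3)) 1) := by
    refine ⟨0, ?_⟩
    rintro _ ⟨v, hv, rfl⟩
    exact div_nonneg (hKnn v) (hLpos v hv).le
  have hbddA : BddAbove ((fun u => supp K u / supp L u) ''
      sphere (0 : EuclideanSpace ℝ (Fin 3)) 1) := by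
    refine ⟨RK / (εL / 2), ?_⟩
    rintro _ ⟨v, hv, rfl⟩
    exact div_le_div₀ hRK0 (hKle v hv) (by linarith) (hLhalf v hv)
  -- pointwise inequality
  have hpt : ∀ u : sphere (0 : EuclideanSpace ℝ (Fin 3)) 1,
      W₂ * ((supp K ↑u) ^ 2 / supp L ↑u) ≤ 2 * W₁ * supp K ↑u - W₀ * supp L ↑u := by
    intro u
    set a := supp K ↑u with ha
    set b := supp L ↑u with hb
    have hbpos : 0 < b := hLpos ↑u u.2
    have hmem : a / b ∈ (fun v => supp K v / supp L v) ''
        sphere (0 : EuclideanSpace ℝ (Fin 3)) 1 := ⟨↑u, u.2, rfl⟩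
    have hB := hR1 (a / b) ⟨csInf_le hbddB hmem, le_csSup hbddA hmem⟩
    have h1 : 0 ≤ (2 * W₁ * (a / b) - W₀ - W₂ * (a / b) ^ 2) * b :=
      mul_nonneg hB hbpos.le
    have h2 : (2 * W₁ * (a / b) - W₀ - W₂ * (a / b) ^ 2) * b
        = 2 * W₁ * a - W₀ * b - W₂ * (a ^ 2 / b) := by
      field_simp
    rw [h2] at h1
    linarith
  -- integrate
  have hmono := MeasureTheory.integral_mono hintg hintr hpt
  rw [MeasureTheory.integral_const_mul] at hmono
  have hsub : (∫ u : sphere (0 : EuclideanSpace ℝ (Fin 3)) 1,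
      (2 * W₁ * supp K ↑u - W₀ * supp L ↑u) ∂μ) = 3 * V * W₁ := by
    rw [MeasureTheory.integral_sub (f := fun u : sphere (0 : EuclideanSpace ℝ (Fin 3)) 1 => 2 * W₁ * supp K ↑u)
      (g := fun u : sphere (0 : EuclideanSpace ℝ (Fin 3)) 1 => W₀ * supp L ↑u)
      ((continuous_const.mul hfKcont).integrable_of_hasCompactSupport
        (HasCompactSupport.of_compactSpace _))
      ((continuous_const.mul hfLcont).integrable_of_hasCompactSupport
        (HasCompactSupport.of_compactSpace _)),
      MeasureTheory.integral_const_mul, MeasureTheory.integral_const_mul, hIK, hIL, ← hV0]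
    ring
  rw [hsub] at hmono
  rw [le_div_iff₀ hW₂pos]
  nlinarith [hmono]
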